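/- Let G be a finite bipartite multigraph (no loops), let k ≥ 0, and let i be an integer with 2 ≤ i ≤ k. Then ν_{k−i+2}(G) + ν_{k+i−2}(G) ≥ ν_{k−i}(G) + ν_{k+i}(G). -/

import Mathlib

variable {V E : Type*}

/-- Degree of vertex `v` in the edge set `A` of a multigraph given by `ends`. -/
def degIn [DecidableEq V] (ends : E → Sym2 V) (A : Finset E) (v : V) : ℕ :=
  (A.filter (fun e => v ∈ ends e)).card

/-- The edge set `A` admits a proper edge coloring with at most `k` colors:
adjacent (distinct, sharing an endpoint) edges get different colors. -/
def EdgeColorable (ends : E → Sym2 V) (A : Finset E) (k : ℕ) : Prop :=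
  ∃ c : E → ℕ, (∀ e ∈ A, c e < k) ∧
    ∀ e₁ ∈ A, ∀ e₂ ∈ A, e₁ ≠ e₂ → (∃ v, v ∈ ends e₁ ∧ v ∈ ends e₂) → c e₁ ≠ c e₂

/-- `ν_k`: the maximum number of edges of a `k`-edge-colorable subgraph whose
edge set lies in `ground`. -/
noncomputable def nu (ends : E → Sym2 V) (ground : Finset E) (k : ℕ) : ℕ :=
  sSup {n | ∃ F : Finset E, F ⊆ ground ∧ EdgeColorable ends F k ∧ F.card = n}

/-- The multigraph given by `ends` is bipartite. -/
def IsBipartite (ends : E → Sym2 V) : Prop :=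
  ∃ f : V → Bool, ∀ e : E, ∀ u v : V, ends e = s(u, v) → f u ≠ f v

/-- There is an `A`-augmenting path: a simple path of odd length whose
odd-numbered (1st, 3rd, ...) edges lie outside `A`, whose even-numbered
(2nd, 4th, ...) edges belong to `A`, and whose endpoints have degree
at most `k - 1` in `A`. -/
def IsAugPath [DecidableEq V] (ends : E → Sym2 V) (A : Finset E) (k : ℕ) : Prop :=
  ∃ (m : ℕ) (vs : Fin (m + 1) → V) (es : Fin m → E),
    Odd m ∧ Function.Injective vs ∧
    (∀ i : Fin m, ends (es i) = s(vs i.castSucc, vs i.succ)) ∧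
    (∀ i : Fin m, (i : ℕ) % 2 = 0 → es i ∉ A) ∧
    (∀ i : Fin m, (i : ℕ) % 2 = 1 → es i ∈ A) ∧
    degIn ends A (vs 0) ≤ k - 1 ∧ degIn ends A (vs (Fin.last m)) ≤ k - 1

section Koenig
variable {V E : Type*} [DecidableEq V] [DecidableEq E]

/-- degree of `v` counted on the `x`-side endpoints -/
def dSide (x : E → V) (A : Finset E) (v : V) : ℕ := (A.filter (fun e => x e = v)).card

theorem koenig (x y : E → V) (d : ℕ) (A : Finset E)
    (hdx : ∀ v, dSide x A v ≤ d) (hdy : ∀ v, dSide y A v ≤ d) :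
    ∃ c : E → ℕ, (∀ e ∈ A, c e < d) ∧
      ∀ e₁ ∈ A, ∀ e₂ ∈ A, e₁ ≠ e₂ → (x e₁ = x e₂ ∨ y e₁ = y e₂) → c e₁ ≠ c e₂ := by
  classical
  induction A using Finset.induction_on with
  | empty => exact ⟨fun _ => 0, by simp, by simp⟩
  | @insert e s hes ih =>
    have hdx' : ∀ v, dSide x s v ≤ d := fun v =>
      le_trans (Finset.card_le_card (Finset.filter_subset_filter _ (Finset.subset_insert e s))) (hdx v)
    have hdy' : ∀ v, dSide y s v ≤ d := fun v =>
      le_trans (Finset.card_le_card (Finset.filter_subset_filter _ (Finset.subset_insert e s))) (hdy v)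
    obtain ⟨c, hc, hprop⟩ := ih hdx' hdy'
    -- free colors at the endpoints of `e`
    set Cu : Finset ℕ := (s.filter (fun a => x a = x e)).image c with hCu
    set Cv : Finset ℕ := (s.filter (fun a => y a = y e)).image c with hCv
    have hdux : dSide x s (x e) + 1 ≤ d := by
      have h1 : dSide x (insert e s) (x e) = dSide x s (x e) + 1 := by
        unfold dSide
        rw [Finset.filter_insert, if_pos rfl, Finset.card_insert_of_notMem]
        intro h; exact hes (Finset.mem_of_mem_filter _ h)
      rw [← h1]; exact hdx (x e)
    have hduy : dSide y s (y e) + 1 ≤ d := by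
      have h1 : dSide y (insert e s) (y e) = dSide y s (y e) + 1 := by
        unfold dSide
        rw [Finset.filter_insert, if_pos rfl, Finset.card_insert_of_notMem]
        intro h; exact hes (Finset.mem_of_mem_filter _ h)
      rw [← h1]; exact hdy (y e)
    have hCur : Cu ⊆ Finset.range d := by
      intro n hn; rw [hCu] at hn
      obtain ⟨a, ha, rfl⟩ := Finset.mem_image.mp hn
      exact Finset.mem_range.mpr (hc a (Finset.mem_of_mem_filter _ ha))
    have hCvr : Cv ⊆ Finset.range d := by
      intro n hn; rw [hCv] at hn
      obtain ⟨a, ha, rfl⟩ := Finset.mem_image.mp hn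
      exact Finset.mem_range.mpr (hc a (Finset.mem_of_mem_filter _ ha))
    have hFu : (Finset.range d \ Cu).Nonempty := by
      rw [← Finset.card_pos, Finset.card_sdiff_of_subset hCur, Finset.card_range]
      have := Finset.card_image_le (s := s.filter (fun a => x a = x e)) (f := c)
      have h2 : Cu.card ≤ dSide x s (x e) := this
      omega
    have hFv : (Finset.range d \ Cv).Nonempty := by
      rw [← Finset.card_pos, Finset.card_sdiff_of_subset hCvr, Finset.card_range]
      have := Finset.card_image_le (s := s.filter (fun a => y a = y e)) (f := c)
      have h2 : Cv.card ≤ dSide y s (y e) := this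
      omega
    obtain ⟨α, hα⟩ := hFu
    obtain ⟨β, hβ⟩ := hFv
    have hαd : α < d := Finset.mem_range.mp (Finset.mem_sdiff.mp hα).1
    have hβd : β < d := Finset.mem_range.mp (Finset.mem_sdiff.mp hβ).1
    have hαCu : α ∉ Cu := (Finset.mem_sdiff.mp hα).2
    have hβCv : β ∉ Cv := (Finset.mem_sdiff.mp hβ).2
    -- convenient forms: no edge at x e colored α; no edge at y e colored β
    have hαu : ∀ a ∈ s, x a = x e → c a ≠ α := by
      intro a ha hax hca
      exact hαCu (hCu ▸ Finset.mem_image.mpr ⟨a, Finset.mem_filter.mpr ⟨ha, hax⟩, hca⟩)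
    have hβv : ∀ a ∈ s, y a = y e → c a ≠ β := by
      intro a ha hay hca
      exact hβCv (hCv ▸ Finset.mem_image.mpr ⟨a, Finset.mem_filter.mpr ⟨ha, hay⟩, hca⟩)
    by_cases hβCu : β ∉ Cu
    · -- β is free at both endpoints: just color e with β
      refine ⟨Function.update c e β, ?_, ?_⟩
      · intro a ha
        rcases Finset.mem_insert.mp ha with rfl | ha'
        · rw [Function.update_self]; exact hβd
        · rw [Function.update_of_ne (by rintro rfl; exact hes ha')]; exact hc a ha'
      · have hβu : ∀ a ∈ s, x a = x e → c a ≠ β := by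
          intro a ha hax hca
          exact hβCu (hCu ▸ Finset.mem_image.mpr ⟨a, Finset.mem_filter.mpr ⟨ha, hax⟩, hca⟩)
        intro a ha b hb hab hadj
        rcases Finset.mem_insert.mp ha with rfl | ha' <;>
          rcases Finset.mem_insert.mp hb with rfl | hb'
        · exact absurd rfl hab
        · rw [Function.update_self, Function.update_of_ne (by rintro rfl; exact hes hb')]
          rcases hadj with hxx | hyy
          · exact fun h => hβu b hb' hxx.symm h.symm
          · exact fun h => hβv b hb' hyy.symm h.symm
        · rw [Function.update_self, Function.update_of_ne (by rintro rfl; exact hes ha')]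
          rcases hadj with hxx | hyy
          · exact fun h => hβu a ha' hxx h
          · exact fun h => hβv a ha' hyy h
        · rw [Function.update_of_ne (by rintro rfl; exact hes ha'),
              Function.update_of_ne (by rintro rfl; exact hes hb')]
          exact hprop a ha' b hb' hab hadj
    · -- β is used at x e : Kempe chain swap
      push_neg at hβCu
      rw [hCu] at hβCu
      obtain ⟨e₀, he₀f, he₀c⟩ := Finset.mem_image.mp hβCu
      obtain ⟨he₀s, he₀x⟩ := Finset.mem_filter.mp he₀f
      have hαβ : α ≠ β := fun h => hαu e₀ he₀s he₀x (h ▸ he₀c)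
      set D : Finset E := s.filter (fun a => c a = α ∨ c a = β) with hD
      have hDs : ∀ a ∈ D, a ∈ s := fun a ha => Finset.mem_of_mem_filter _ ha
      have hDc : ∀ a ∈ D, c a = α ∨ c a = β := fun a ha => (Finset.mem_filter.mp ha).2
      set Step : E → E → Prop := fun a b => a ∈ D ∧ b ∈ D ∧
        ((c a = β ∧ c b = α ∧ y a = y b) ∨ (c a = α ∧ c b = β ∧ x a = x b)) with hStep
      set S : Set E := {a | Relation.ReflTransGen Step e₀ a} with hSdef
      have he₀D : e₀ ∈ D := Finset.mem_filter.mpr ⟨he₀s, Or.inr he₀c⟩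
      have he₀S : e₀ ∈ S := Relation.ReflTransGen.refl
      have hSD : ∀ a ∈ S, a ∈ D := by
        intro a ha
        rcases Relation.ReflTransGen.cases_tail ha with rfl | ⟨p, _, hp⟩
        · exact he₀D
        · exact hp.2.1
      have huniqx : ∀ a ∈ s, ∀ b ∈ s, x a = x b → c a = c b → a = b := by
        intro a ha b hb hxx hcc
        by_contra hne
        exact hprop a ha b hb hne (Or.inl hxx) hcc
      have huniqy : ∀ a ∈ s, ∀ b ∈ s, y a = y b → c a = c b → a = b := by
        intro a ha b hb hyy hcc
        by_contra hne
        exact hprop a ha b hb hne (Or.inr hyy) hcc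
      -- closure of S under adjacency within D
      have hclose : ∀ a ∈ S, ∀ b ∈ D, a ≠ b → (x a = x b ∨ y a = y b) → b ∈ S := by
        intro a haS b hbD hab hadj
        have haD := hSD a haS
        have hcab : c a ≠ c b := hprop a (hDs a haD) b (hDs b hbD) hab hadj
        rcases hDc a haD with hca | hca <;> rcases hDc b hbD with hcb | hcb
        · exact absurd (hca.trans hcb.symm) hcab
        · -- c a = α, c b = β
          rcases hadj with hxx | hyy
          · exact Relation.ReflTransGen.tail haS ⟨haD, hbD, Or.inr ⟨hca, hcb, hxx⟩⟩
          · rcases Relation.ReflTransGen.cases_tail haS with rfl | ⟨p, hpS, hp⟩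
            · exact (hαβ (hca.symm.trans he₀c)).elim
            · rcases hp.2.2 with ⟨hpβ, _, hpy⟩ | ⟨_, haβ, _⟩
              · have hpb : p = b := huniqy p (hDs p hp.1) b (hDs b hbD)
                  (hpy.trans hyy) (hpβ.trans hcb.symm)
                exact hpb ▸ hpS
              · exact (hαβ (hca.symm.trans haβ)).elim
        · -- c a = β, c b = α
          rcases hadj with hxx | hyy
          · rcases Relation.ReflTransGen.cases_tail haS with rfl | ⟨p, hpS, hp⟩
            · exact (hαu b (hDs b hbD) (hxx.symm.trans he₀x) hcb).elim
            · rcases hp.2.2 with ⟨_, haα, _⟩ | ⟨hpα, _, hpx⟩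
              · exact (hαβ (haα.symm.trans hca)).elim
              · have hpb : p = b := huniqx p (hDs p hp.1) b (hDs b hbD)
                  (hpx.trans hxx) (hpα.trans hcb.symm)
                exact hpb ▸ hpS
          · exact Relation.ReflTransGen.tail haS ⟨haD, hbD, Or.inl ⟨hca, hcb, hyy⟩⟩
        · exact absurd (hca.trans hcb.symm) hcab
      -- edges of S never touch y e
      have hvS : ∀ a ∈ S, y a ≠ y e := by
        intro a haS hay
        have haD := hSD a haS
        rcases hDc a haD with hca | hca
        · rcases Relation.ReflTransGen.cases_tail haS with rfl | ⟨p, _, hp⟩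
          · exact hαβ (hca.symm.trans he₀c)
          · rcases hp.2.2 with ⟨hpβ, _, hpy⟩ | ⟨_, haβ, _⟩
            · exact hβv p (hDs p hp.1) (hpy.trans hay) hpβ
            · exact hαβ (hca.symm.trans haβ)
        · exact hβv a (hDs a haD) hay hca
      -- the unique β-colored edge at x e is e₀
      have huβ : ∀ a ∈ s, x a = x e → c a = β → a = e₀ :=
        fun a ha hax hca => huniqx a ha e₀ he₀s (hax.trans he₀x.symm) (hca.trans he₀c.symm)
      -- swapped coloring
      set c₁ : E → ℕ := fun a => if a ∈ S then (if c a = α then β else α) else c a with hc₁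
      have hc₁mem : ∀ a ∈ S, c₁ a = α ∨ c₁ a = β := by
        intro a haS
        rw [hc₁]; simp only [if_pos haS]
        by_cases h : c a = α
        · rw [if_pos h]; exact Or.inr rfl
        · rw [if_neg h]; exact Or.inl rfl
      have hc₁out : ∀ a, a ∉ S → c₁ a = c a := by
        intro a haS; rw [hc₁]; simp only [if_neg haS]
      have swapval : ∀ a ∈ S, (c a = α → c₁ a = β) ∧ (c a = β → c₁ a = α) := by
        intro a haS
        constructor <;> intro h <;> simp only [hc₁] <;> rw [if_pos haS]
        · rw [if_pos h]
        · rw [if_neg (by rw [h]; exact Ne.symm hαβ)]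
      -- key: after the swap, no edge of s adjacent to e is colored β
      have key : ∀ b ∈ s, (x b = x e ∨ y b = y e) → c₁ b ≠ β := by
        intro b hb hadj hcb
        by_cases hbS : b ∈ S
        · have hbD := hSD b hbS
          rcases hadj with hbx | hby
          · rcases hDc b hbD with hcbα | hcbβ
            · exact hαu b hb hbx hcbα
            · -- swapped to α, contradiction with c₁ b = β
              exact hαβ (((swapval b hbS).2 hcbβ).symm.trans hcb)
          · exact hvS b hbS hby
        · rw [hc₁out b hbS] at hcb
          rcases hadj with hbx | hby
          · exact hbS ((huβ b hb hbx hcb) ▸ he₀S)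
          · exact hβv b hb hby hcb
      refine ⟨Function.update c₁ e β, ?_, ?_⟩
      · intro a ha
        rcases Finset.mem_insert.mp ha with rfl | ha'
        · rw [Function.update_self]; exact hβd
        · rw [Function.update_of_ne (by rintro rfl; exact hes ha')]
          by_cases haS : a ∈ S
          · rcases hc₁mem a haS with h | h <;> rw [h] <;> [exact hαd; exact hβd]
          · rw [hc₁out a haS]; exact hc a ha'
      · intro a ha b hb hab hadj
        rcases Finset.mem_insert.mp ha with rfl | ha' <;>
          rcases Finset.mem_insert.mp hb with rfl | hb'
        · exact absurd rfl hab
        · rw [Function.update_self, Function.update_of_ne (by rintro rfl; exact hes hb')]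
          exact fun h => key b hb' (hadj.imp Eq.symm Eq.symm) h.symm
        · rw [Function.update_self, Function.update_of_ne (by rintro rfl; exact hes ha')]
          exact key a ha' hadj
        · rw [Function.update_of_ne (by rintro rfl; exact hes ha'),
              Function.update_of_ne (by rintro rfl; exact hes hb')]
          by_cases haS : a ∈ S <;> by_cases hbS : b ∈ S
          · -- both swapped : colors were α,β in some order
            have hcab : c a ≠ c b := hprop a ha' b hb' hab hadj
            rcases hDc a (hSD a haS) with h1 | h1 <;> rcases hDc b (hSD b hbS) with h2 | h2
            · exact absurd (h1.trans h2.symm) hcab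
            · rw [(swapval a haS).1 h1, (swapval b hbS).2 h2]; exact hαβ.symm
            · rw [(swapval a haS).2 h1, (swapval b hbS).1 h2]; exact hαβ
            · exact absurd (h1.trans h2.symm) hcab
          · have hbD : b ∉ D := fun hbD => hbS (hclose a haS b hbD hab hadj)
            rw [hc₁out b hbS]
            have hcb : c b ≠ α ∧ c b ≠ β := by
              constructor <;> intro h <;> exact hbD (Finset.mem_filter.mpr ⟨hb', by tauto⟩)
            rcases hc₁mem a haS with h | h <;> rw [h]
            · exact fun hh => hcb.1 hh.symm
            · exact fun hh => hcb.2 hh.symm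
          · have haD : a ∉ D := fun haD => haS (hclose b hbS a haD (Ne.symm hab) (hadj.imp Eq.symm Eq.symm))
            rw [hc₁out a haS]
            have hca : c a ≠ α ∧ c a ≠ β := by
              constructor <;> intro h <;> exact haD (Finset.mem_filter.mpr ⟨ha', by tauto⟩)
            rcases hc₁mem b hbS with h | h <;> rw [h]
            · exact hca.1
            · exact hca.2
          · rw [hc₁out a haS, hc₁out b hbS]
            exact hprop a ha' b hb' hab hadj
end Koenig

section Euler
variable {V E : Type*} [DecidableEq V] [DecidableEq E]

theorem euler_split (x y : E → V) (g : E → ℕ) (hg : Function.Injective g) (D : Finset E) :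
    ∃ D₁, D₁ ⊆ D ∧ ∀ v,
      (2 * dSide x D₁ v ≤ dSide x D v + 1 ∧ 2 * dSide y D₁ v ≤ dSide y D v + 1) ∧
      (2 * dSide x (D \ D₁) v ≤ dSide x D v + 1 ∧ 2 * dSide y (D \ D₁) v ≤ dSide y D v + 1) := by
  classical
  set rx : E → ℕ := fun e => (D.filter (fun a => x a = x e ∧ g a < g e)).card with hrx
  set ry : E → ℕ := fun e => (D.filter (fun a => y a = y e ∧ g a < g e)).card with hry
  set x' : E → V × ℕ := fun e => (x e, rx e / 2) with hx'
  set y' : E → V × ℕ := fun e => (y e, ry e / 2) with hy'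
  have keymono : ∀ (z : E → V), ∀ e₁ ∈ D, ∀ e₂ ∈ D, z e₁ = z e₂ → g e₁ < g e₂ →
      (D.filter (fun a => z a = z e₁ ∧ g a < g e₁)).card
        < (D.filter (fun a => z a = z e₂ ∧ g a < g e₂)).card := by
    intro z e₁ h₁ e₂ h₂ hz hlt
    apply Finset.card_lt_card
    rw [Finset.ssubset_def]
    constructor
    · intro a ha
      rw [Finset.mem_filter] at ha ⊢
      exact ⟨ha.1, ha.2.1.trans hz, ha.2.2.trans hlt⟩
    · intro hsup
      have := hsup (Finset.mem_filter.mpr ⟨h₁, hz, hlt⟩)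
      exact absurd (Finset.mem_filter.mp this).2.2 (lt_irrefl _)
  have keyinj : ∀ (z : E → V), ∀ e₁ ∈ D, ∀ e₂ ∈ D, z e₁ = z e₂ →
      (D.filter (fun a => z a = z e₁ ∧ g a < g e₁)).card
        = (D.filter (fun a => z a = z e₂ ∧ g a < g e₂)).card → e₁ = e₂ := by
    intro z e₁ h₁ e₂ h₂ hz hr
    rcases lt_trichotomy (g e₁) (g e₂) with h | h | h
    · exact absurd hr (Nat.ne_of_lt (keymono z e₁ h₁ e₂ h₂ hz h))
    · exact hg h
    · exact absurd hr.symm (Nat.ne_of_lt (keymono z e₂ h₂ e₁ h₁ hz.symm h))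
  have keylt : ∀ (z : E → V), ∀ e ∈ D,
      (D.filter (fun a => z a = z e ∧ g a < g e)).card < dSide z D (z e) := by
    intro z e he
    apply Finset.card_lt_card
    rw [Finset.ssubset_def]
    constructor
    · intro a ha
      rw [Finset.mem_filter] at ha ⊢
      exact ⟨ha.1, ha.2.1⟩
    · intro hsup
      have := hsup (Finset.mem_filter.mpr ⟨he, rfl⟩)
      exact absurd (Finset.mem_filter.mp this).2.2 (lt_irrefl _)
  have hb2x : ∀ w, dSide x' D w ≤ 2 := by
    intro w
    have : dSide x' D w ≤ ({2 * w.2, 2 * w.2 + 1} : Finset ℕ).card := by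
      apply Finset.card_le_card_of_injOn rx
      · intro a ha
        obtain ⟨haD, hax⟩ := Finset.mem_filter.mp ha
        have h2 : rx a / 2 = w.2 := congrArg Prod.snd hax
        simp only [Finset.mem_coe, Finset.mem_insert, Finset.mem_singleton]
        omega
      · intro a ha b hb hr
        simp only [Finset.coe_filter, Set.mem_setOf_eq] at ha hb
        exact keyinj x a ha.1 b hb.1
          ((congrArg Prod.fst ha.2).trans (congrArg Prod.fst hb.2).symm) hr
    refine this.trans ?_
    exact (Finset.card_insert_le _ _).trans (by simp)
  have hb2y : ∀ w, dSide y' D w ≤ 2 := by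
    intro w
    have : dSide y' D w ≤ ({2 * w.2, 2 * w.2 + 1} : Finset ℕ).card := by
      apply Finset.card_le_card_of_injOn ry
      · intro a ha
        obtain ⟨haD, hax⟩ := Finset.mem_filter.mp ha
        have h2 : ry a / 2 = w.2 := congrArg Prod.snd hax
        simp only [Finset.mem_coe, Finset.mem_insert, Finset.mem_singleton]
        omega
      · intro a ha b hb hr
        simp only [Finset.coe_filter, Set.mem_setOf_eq] at ha hb
        exact keyinj y a ha.1 b hb.1
          ((congrArg Prod.fst ha.2).trans (congrArg Prod.fst hb.2).symm) hr
    refine this.trans ?_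
    exact (Finset.card_insert_le _ _).trans (by simp)
  obtain ⟨c, hc2, hprop⟩ := koenig x' y' 2 D hb2x hb2y
  have main : ∀ (z : E → V) (rz : E → ℕ),
      (∀ e ∈ D, rz e < dSide z D (z e)) →
      (∀ e₁ ∈ D, ∀ e₂ ∈ D, e₁ ≠ e₂ → z e₁ = z e₂ → rz e₁ / 2 = rz e₂ / 2 → c e₁ ≠ c e₂) →
      ∀ (k : ℕ) (v : V), 2 * dSide z (D.filter (fun e => c e = k)) v ≤ dSide z D v + 1 := by
    intro z rz hlt hpr k v
    have hcard : dSide z (D.filter (fun e => c e = k)) v ≤ (Finset.range ((dSide z D v + 1) / 2)).card := by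
      apply Finset.card_le_card_of_injOn (fun e => rz e / 2)
      · intro a ha
        rw [Finset.mem_coe, Finset.mem_filter, Finset.mem_filter] at ha
        have h1 : rz a < dSide z D (z a) := hlt a ha.1.1
        rw [ha.2] at h1
        rw [Finset.mem_coe, Finset.mem_range]
        show rz a / 2 < _
        omega
      · intro a ha b hb hr
        simp only [Finset.coe_filter, Set.mem_setOf_eq, Finset.mem_filter] at ha hb
        by_contra hab
        exact hpr a ha.1.1 b hb.1.1 hab (ha.2.trans hb.2.symm) hr
          (ha.1.2.trans hb.1.2.symm)
    rw [Finset.card_range] at hcard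
    omega
  refine ⟨D.filter (fun e => c e = 0), Finset.filter_subset _ _, ?_⟩
  have hsd : D \ D.filter (fun e => c e = 0) = D.filter (fun e => c e = 1) := by
    ext a
    simp only [Finset.mem_sdiff, Finset.mem_filter]
    constructor
    · rintro ⟨haD, h⟩
      have := hc2 a haD
      refine ⟨haD, ?_⟩
      by_cases h0 : c a = 0
      · exact absurd ⟨haD, h0⟩ h
      · omega
    · rintro ⟨haD, h1⟩
      exact ⟨haD, fun hh => by omega⟩
  intro v
  have hx1 := main x rx (fun e he => keylt x e he)
    (fun e₁ h₁ e₂ h₂ hne hz hr => hprop e₁ h₁ e₂ h₂ hne (Or.inl (Prod.ext hz hr)))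
  have hy1 := main y ry (fun e he => keylt y e he)
    (fun e₁ h₁ e₂ h₂ hne hz hr => hprop e₁ h₁ e₂ h₂ hne (Or.inr (Prod.ext hz hr)))
  rw [hsd]
  exact ⟨⟨hx1 0 v, hy1 0 v⟩, hx1 1 v, hy1 1 v⟩
end Euler

section Bridge
variable {V E : Type*} [Fintype V] [Fintype E] [DecidableEq V]

theorem nu_bddAbove (ends : E → Sym2 V) (d : ℕ) :
    ∀ n ∈ {n | ∃ F : Finset E, F ⊆ Finset.univ ∧ EdgeColorable ends F d ∧ F.card = n},
      n ≤ Fintype.card E := by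
  rintro n ⟨F, -, -, rfl⟩
  exact Finset.card_le_univ F

theorem nu_spec (ends : E → Sym2 V) (d : ℕ) :
    ∃ F : Finset E, EdgeColorable ends F d ∧ F.card = nu ends Finset.univ d := by
  have h := Nat.sSup_mem (s := {n | ∃ F : Finset E, F ⊆ Finset.univ ∧
      EdgeColorable ends F d ∧ F.card = n})
    ⟨0, ∅, Finset.empty_subset _, ⟨fun _ => 0, by simp, by simp⟩, rfl⟩
    ⟨Fintype.card E, nu_bddAbove ends d⟩
  obtain ⟨F, -, hF, hcard⟩ := h
  exact ⟨F, hF, hcard⟩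

theorem le_nu (ends : E → Sym2 V) (d : ℕ) (F : Finset E) (h : EdgeColorable ends F d) :
    F.card ≤ nu ends Finset.univ d :=
  le_csSup ⟨Fintype.card E, nu_bddAbove ends d⟩ ⟨F, Finset.subset_univ F, h, rfl⟩

theorem deg_of_colorable (ends : E → Sym2 V) (A : Finset E) (d : ℕ)
    (h : EdgeColorable ends A d) : ∀ v, degIn ends A v ≤ d := by
  obtain ⟨c, hc, hprop⟩ := h
  intro v
  have : degIn ends A v ≤ (Finset.range d).card := by
    apply Finset.card_le_card_of_injOn c
    · intro a ha
      rw [Finset.mem_coe, Finset.mem_filter] at ha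
      exact Finset.mem_range.mpr (hc a ha.1)
    · intro a ha b hb hcc
      simp only [Finset.coe_filter, Set.mem_setOf_eq] at ha hb
      by_contra hab
      exact hprop a ha.1 b hb.1 hab ⟨v, ha.2, hb.2⟩ hcc
  rwa [Finset.card_range] at this

theorem concave (ends : E → Sym2 V) (hbip : IsBipartite ends) (a : ℕ) :
    nu ends Finset.univ a + nu ends Finset.univ (a + 2) ≤ 2 * nu ends Finset.univ (a + 1) := by
  classical
  obtain ⟨f, hf⟩ := hbip
  -- choose oriented endpoints
  have hxy : ∀ e : E, ∃ p : V × V, ends e = s(p.1, p.2) ∧ f p.1 = true ∧ f p.2 = false := by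
    intro e
    obtain ⟨u, v, huv⟩ : ∃ u v, ends e = s(u, v) :=
      Sym2.ind (f := fun z => z = ends e → ∃ u v, ends e = s(u, v))
        (fun u v h => ⟨u, v, h.symm⟩) (ends e) rfl
    have hne := hf e u v huv
    cases hu : f u <;> cases hv : f v
    · rw [hu, hv] at hne; exact absurd rfl hne
    · exact ⟨(v, u), by rw [huv, Sym2.eq_swap], hv, hu⟩
    · exact ⟨(u, v), huv, hu, hv⟩
    · rw [hu, hv] at hne; exact absurd rfl hne
  set xe : E → V := fun e => (Classical.choose (hxy e)).1 with hxe
  set ye : E → V := fun e => (Classical.choose (hxy e)).2 with hye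
  have hends : ∀ e, ends e = s(xe e, ye e) := fun e => (Classical.choose_spec (hxy e)).1
  have hfx : ∀ e, f (xe e) = true := fun e => (Classical.choose_spec (hxy e)).2.1
  have hfy : ∀ e, f (ye e) = false := fun e => (Classical.choose_spec (hxy e)).2.2
  have hmem : ∀ (e : E) (v : V), v ∈ ends e ↔ xe e = v ∨ ye e = v := by
    intro e v
    rw [hends e, Sym2.mem_iff]
    constructor
    · rintro (rfl | rfl) <;> [exact Or.inl rfl; exact Or.inr rfl]
    · rintro (rfl | rfl) <;> [exact Or.inl rfl; exact Or.inr rfl]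
  have hdeg : ∀ (A : Finset E) (v : V), degIn ends A v = dSide xe A v + dSide ye A v := by
    intro A v
    unfold degIn dSide
    rw [show A.filter (fun e => v ∈ ends e) = A.filter (fun e => xe e = v ∨ ye e = v) from
      Finset.filter_congr (fun e _ => by rw [hmem])]
    rw [Finset.filter_or, Finset.card_union_of_disjoint]
    rw [Finset.disjoint_left]
    intro e h1 h2
    rw [Finset.mem_filter] at h1 h2
    have := (h1.2 ▸ hfx e).symm.trans (h2.2 ▸ hfy e)
    exact Bool.noConfusion this
  have hdx_le : ∀ (A : Finset E) (v : V), dSide xe A v ≤ degIn ends A v := by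
    intro A v; rw [hdeg]; omega
  have hdy_le : ∀ (A : Finset E) (v : V), dSide ye A v ≤ degIn ends A v := by
    intro A v; rw [hdeg]; omega
  have colorable_of_deg : ∀ (A : Finset E) (d : ℕ),
      (∀ v, degIn ends A v ≤ d) → EdgeColorable ends A d := by
    intro A d hA
    obtain ⟨c, hc, hprop⟩ := koenig xe ye d A
      (fun v => (hdx_le A v).trans (hA v)) (fun v => (hdy_le A v).trans (hA v))
    refine ⟨c, hc, ?_⟩
    rintro e₁ h₁ e₂ h₂ hne ⟨w, hw₁, hw₂⟩
    rw [hmem] at hw₁ hw₂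
    apply hprop e₁ h₁ e₂ h₂ hne
    rcases hw₁ with rfl | rfl <;> rcases hw₂ with h | h
    · exact Or.inl h.symm
    · exact absurd ((hfx e₁).symm.trans (h ▸ hfy e₂)) Bool.noConfusion
    · exact absurd ((hfy e₁).symm.trans (h ▸ hfx e₂)) Bool.noConfusion
    · exact Or.inr h.symm
  -- take optimal subgraphs
  obtain ⟨A, hAc, hAcard⟩ := nu_spec ends a
  obtain ⟨B, hBc, hBcard⟩ := nu_spec ends (a + 2)
  have hA : ∀ v, degIn ends A v ≤ a := deg_of_colorable ends A a hAc
  have hB : ∀ v, degIn ends B v ≤ a + 2 := deg_of_colorable ends B (a + 2) hBc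
  set D : Finset E := (A ∪ B) \ (A ∩ B) with hD
  have hg : Function.Injective (fun e => ((Fintype.equivFin E) e : ℕ)) :=
    fun _ _ h => (Fintype.equivFin E).injective (Fin.val_injective h)
  obtain ⟨D₁, hD₁sub, hsplit⟩ := euler_split xe ye _ hg D
  set A' : Finset E := (A ∩ B) ∪ D₁ with hA'
  set B' : Finset E := (A ∩ B) ∪ (D \ D₁) with hB'
  have hdisj : Disjoint (A ∩ B) D := Finset.disjoint_sdiff
  have hdisj1 : Disjoint (A ∩ B) D₁ := hdisj.mono_right hD₁sub
  have hdisj2 : Disjoint (A ∩ B) (D \ D₁) := hdisj.mono_right (Finset.sdiff_subset)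
  -- cardinalities
  have hcard1 : A'.card = (A ∩ B).card + D₁.card := Finset.card_union_of_disjoint hdisj1
  have hcard2 : B'.card = (A ∩ B).card + (D \ D₁).card := Finset.card_union_of_disjoint hdisj2
  have hDsplit : (D \ D₁).card + D₁.card = D.card := Finset.card_sdiff_add_card_eq_card hD₁sub
  have hDcard : D.card + (A ∩ B).card = (A ∪ B).card := by
    rw [hD]
    exact Finset.card_sdiff_add_card_eq_card (Finset.inter_subset_union)
  have hABcard : (A ∪ B).card + (A ∩ B).card = A.card + B.card :=
    Finset.card_union_add_card_inter A B
  -- degree additivity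
  have hdegadd : ∀ (s t : Finset E), Disjoint s t → ∀ v,
      degIn ends (s ∪ t) v = degIn ends s v + degIn ends t v := by
    intro s t hst v
    unfold degIn
    rw [Finset.filter_union, Finset.card_union_of_disjoint
      (Finset.disjoint_filter_filter hst)]
  have hdegAB : ∀ v, degIn ends A v + degIn ends B v
      = degIn ends D v + 2 * degIn ends (A ∩ B) v := by
    intro v
    have h1 : degIn ends (A ∪ B) v + degIn ends (A ∩ B) v
        = degIn ends A v + degIn ends B v := by
      unfold degIn
      rw [Finset.filter_union, Finset.filter_inter_distrib]
      exact Finset.card_union_add_card_inter _ _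
    have h2 : degIn ends (A ∪ B) v = degIn ends D v + degIn ends (A ∩ B) v := by
      have : D ∪ (A ∩ B) = A ∪ B := by
        rw [hD]
        exact Finset.sdiff_union_of_subset (Finset.inter_subset_union)
      rw [← this, hdegadd D (A ∩ B) hdisj.symm v]
    omega
  -- the two halves are balanced per vertex
  have hhalf : ∀ v, 2 * degIn ends D₁ v ≤ degIn ends D v + 1 ∧
      2 * degIn ends (D \ D₁) v ≤ degIn ends D v + 1 := by
    intro v
    obtain ⟨⟨hx1, hy1⟩, hx2, hy2⟩ := hsplit v
    have hzx : f v = false → ∀ C : Finset E, dSide xe C v = 0 := by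
      intro hv C
      unfold dSide
      rw [Finset.card_eq_zero, Finset.filter_eq_empty_iff]
      intro e _ he
      exact Bool.noConfusion ((he ▸ hfx e).symm.trans hv)
    have hzy : f v = true → ∀ C : Finset E, dSide ye C v = 0 := by
      intro hv C
      unfold dSide
      rw [Finset.card_eq_zero, Finset.filter_eq_empty_iff]
      intro e _ he
      exact Bool.noConfusion ((he ▸ hfy e).symm.trans hv)
    cases hv : f v
    · have z1 := hzx hv D₁; have z2 := hzx hv (D \ D₁); have z3 := hzx hv D
      rw [hdeg, hdeg, hdeg, z1, z2, z3]
      omega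
    · have z1 := hzy hv D₁; have z2 := hzy hv (D \ D₁); have z3 := hzy hv D
      rw [hdeg, hdeg, hdeg, z1, z2, z3]
      omega
  have hdegA' : ∀ v, degIn ends A' v ≤ a + 1 := by
    intro v
    have h1 := hdegadd (A ∩ B) D₁ hdisj1 v
    have h2 := (hhalf v).1
    have h3 := hdegAB v
    have h4 := hA v
    have h5 := hB v
    rw [hA', h1]
    omega
  have hdegB' : ∀ v, degIn ends B' v ≤ a + 1 := by
    intro v
    have h1 := hdegadd (A ∩ B) (D \ D₁) hdisj2 v
    have h2 := (hhalf v).2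
    have h3 := hdegAB v
    have h4 := hA v
    have h5 := hB v
    rw [hB', h1]
    omega
  have hle1 : A'.card ≤ nu ends Finset.univ (a + 1) :=
    le_nu ends (a + 1) A' (colorable_of_deg A' (a + 1) hdegA')
  have hle2 : B'.card ≤ nu ends Finset.univ (a + 1) :=
    le_nu ends (a + 1) B' (colorable_of_deg B' (a + 1) hdegB')
  omega

theorem tele (ends : E → Sym2 V) (hbip : IsBipartite ends) :
    ∀ (j a : ℕ), nu ends Finset.univ a + nu ends Finset.univ (a + j + 2)
      ≤ nu ends Finset.univ (a + 1) + nu ends Finset.univ (a + j + 1) := by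
  intro j
  induction j with
  | zero =>
    intro a
    have := concave ends hbip a
    have e1 : a + 0 + 2 = a + 2 := by omega
    have e2 : a + 0 + 1 = a + 1 := by omega
    rw [e1, e2]
    omega
  | succ j ih =>
    intro a
    have h1 := concave ends hbip a
    have h2 := ih (a + 1)
    have e1 : a + 1 + j + 2 = a + (j + 1) + 2 := by omega
    have e2 : a + 1 + j + 1 = a + (j + 1) + 1 := by omega
    have e3 : a + 1 + 1 = a + 2 := by omega
    rw [e1, e2, e3] at h2
    omega

end Bridge

/-- For a finite bipartite loopless multigraph `G` and `2 ≤ i ≤ k`: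
`ν_{k-i+2}(G) + ν_{k+i-2}(G) ≥ ν_{k-i}(G) + ν_{k+i}(G)`. -/
theorem stmt_11 [Fintype V] [Fintype E] [DecidableEq V] (ends : E → Sym2 V)
    (hloop : ∀ e : E, ¬ (ends e).IsDiag) (hbip : IsBipartite ends)
    (k i : ℕ) (h2i : 2 ≤ i) (hik : i ≤ k) :
    nu ends (Finset.univ : Finset E) (k - i + 2) +
        nu ends (Finset.univ : Finset E) (k + i - 2) ≥
      nu ends (Finset.univ : Finset E) (k - i) +
        nu ends (Finset.univ : Finset E) (k + i) := by
  have h1 := tele ends hbip (2 * i - 2) (k - i)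
  have h2 := tele ends hbip (2 * i - 4) (k - i + 1)
  have e1 : k - i + (2 * i - 2) + 2 = k + i := by omega
  have e2 : k - i + (2 * i - 2) + 1 = k + i - 1 := by omega
  have e3 : k - i + 1 + (2 * i - 4) + 2 = k + i - 1 := by omega
  have e4 : k - i + 1 + (2 * i - 4) + 1 = k + i - 2 := by omega
  have e5 : k - i + 1 + 1 = k - i + 2 := by omega
  rw [e1, e2] at h1
  rw [e3, e4, e5] at h2
  omega
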